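/- The sequence {b_2(n)/n!}_{n=0}^∞ is log-concave and the sequence {b_2(n)}_{n=0}^∞ is log-convex, where b_2(n) are the classical Bell numbers, i.e., the coefficients determined by e^{eˣ − 1} = Σ_{n≥0} b_2(n) xⁿ/n!. -/

import Mathlib

open scoped Nat

/-- The classical Bell numbers: `bellTwo n = B₂(n) / e`, where `B₂(n)` is the `n`-th
derivative of `exp (exp x)` at `x = 0`; equivalently
`exp (exp x - 1) = ∑ n, bellTwo n * x ^ n / n !`. -/
noncomputable def bellTwo (n : ℕ) : ℝ :=
  iteratedDeriv n (fun x : ℝ => Real.exp (Real.exp x)) 0 / Real.exp 1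

open Finset


noncomputable def fB : ℝ → ℝ := fun x : ℝ => Real.exp (Real.exp x)

lemma contDiff_fB : ContDiff ℝ ⊤ fB := Real.contDiff_exp.comp Real.contDiff_exp

lemma hasDerivAt_iteratedDeriv_fB (k : ℕ) (x : ℝ) :
    HasDerivAt (iteratedDeriv k fB) (iteratedDeriv (k+1) fB x) x := by
  have h := ((contDiff_fB.of_le le_top).differentiable_iteratedDeriv k
    (Nat.cast_lt.mpr k.lt_succ_self) : Differentiable ℝ (iteratedDeriv k fB))
  rw [iteratedDeriv_succ]
  exact (h x).hasDerivAt

lemma iteratedDeriv_fB_succ (m : ℕ) :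
    iteratedDeriv (m+1) fB = fun x => Real.exp x *
      ∑ k ∈ range (m+1), (m.choose k : ℝ) * iteratedDeriv k fB x := by
  induction m with
  | zero =>
    funext x
    rw [iteratedDeriv_one]
    have h : HasDerivAt fB (Real.exp (Real.exp x) * Real.exp x) x :=
      (Real.hasDerivAt_exp x).exp
    rw [h.deriv]
    simp [fB, iteratedDeriv_zero, mul_comm]
  | succ m ih =>
    funext x
    rw [iteratedDeriv_succ, ih]
    have hS : HasDerivAt (fun y => ∑ k ∈ range (m+1), (m.choose k : ℝ) * iteratedDeriv k fB y)
        (∑ k ∈ range (m+1), (m.choose k : ℝ) * iteratedDeriv (k+1) fB x) x := by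
      apply HasDerivAt.fun_sum
      intro k _
      exact (hasDerivAt_iteratedDeriv_fB k x).const_mul _
    have h : HasDerivAt (fun y => Real.exp y *
        ∑ k ∈ range (m+1), (m.choose k : ℝ) * iteratedDeriv k fB y)
        (Real.exp x * (∑ k ∈ range (m+1), (m.choose k : ℝ) * iteratedDeriv k fB x)
          + Real.exp x * (∑ k ∈ range (m+1), (m.choose k : ℝ) * iteratedDeriv (k+1) fB x)) x := by
      exact (Real.hasDerivAt_exp x).mul hS
    rw [h.deriv, ← mul_add]
    congr 1
    -- Pascal: ∑ C(m,k) g k + ∑ C(m,k) g (k+1) = ∑ C(m+1,k) g k over range (m+2)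
    have e1 : ∑ k ∈ range (m+2), ((m+1).choose k : ℝ) * iteratedDeriv k fB x
        = iteratedDeriv 0 fB x + ∑ k ∈ range (m+1), ((m+1).choose (k+1) : ℝ) * iteratedDeriv (k+1) fB x := by
      rw [Finset.sum_range_succ' (fun k => ((m+1).choose k : ℝ) * iteratedDeriv k fB x) (m+1)]
      simp [add_comm]
    have e2 : ∑ k ∈ range (m+1), ((m+1).choose (k+1) : ℝ) * iteratedDeriv (k+1) fB x
        = ∑ k ∈ range (m+1), (m.choose k : ℝ) * iteratedDeriv (k+1) fB x
          + ∑ k ∈ range (m+1), (m.choose (k+1) : ℝ) * iteratedDeriv (k+1) fB x := by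
      rw [← Finset.sum_add_distrib]
      apply Finset.sum_congr rfl
      intro k _
      rw [Nat.choose_succ_succ]
      push_cast
      ring
    have e3 : ∑ k ∈ range (m+1), (m.choose (k+1) : ℝ) * iteratedDeriv (k+1) fB x
        = ∑ k ∈ range (m+1), (m.choose k : ℝ) * iteratedDeriv k fB x - iteratedDeriv 0 fB x := by
      rw [Finset.sum_range_succ' (fun k => (m.choose k : ℝ) * iteratedDeriv k fB x) m,
        Finset.sum_range_succ]
      simp [Nat.choose_succ_self]
    rw [e1, e2, e3]
    ring


lemma bellTwo_eq (n : ℕ) : bellTwo n = iteratedDeriv n fB 0 / Real.exp 1 := rfl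


lemma bellTwo_zero : bellTwo 0 = 1 := by
  rw [bellTwo_eq, iteratedDeriv_zero]
  simp [fB, div_self (Real.exp_ne_zero 1)]

lemma bellTwo_succ (m : ℕ) :
    bellTwo (m+1) = ∑ k ∈ range (m+1), (m.choose k : ℝ) * bellTwo k := by
  rw [bellTwo_eq, iteratedDeriv_fB_succ]
  simp only [Real.exp_zero, one_mul]
  rw [Finset.sum_div]
  apply Finset.sum_congr rfl
  intro k _
  rw [bellTwo_eq, mul_div_assoc]

lemma one_le_bellTwo (n : ℕ) : 1 ≤ bellTwo n := by
  induction n using Nat.strong_induction_on with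
  | _ n ih =>
    match n with
    | 0 => rw [bellTwo_zero]
    | (m+1) =>
      rw [bellTwo_succ]
      calc (1:ℝ) = (m.choose m : ℝ) * 1 := by simp
      _ ≤ (m.choose m : ℝ) * bellTwo m := by
          apply mul_le_mul_of_nonneg_left (ih m (by omega)) (by positivity)
      _ ≤ ∑ k ∈ range (m+1), (m.choose k : ℝ) * bellTwo k := by
          apply Finset.single_le_sum (f := fun k => (m.choose k : ℝ) * bellTwo k)
            (fun k hk => ?_) (self_mem_range_succ m)
          have := ih k (by simpa using hk)
          positivity
lemma bellTwo_pos (n : ℕ) : 0 < bellTwo n := lt_of_lt_of_le one_pos (one_le_bellTwo n)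


lemma bellTwo_one : bellTwo 1 = 1 := by
  rw [bellTwo_succ]
  simp [bellTwo_zero]



noncomputable def cB (n : ℕ) : ℝ := bellTwo n / (n)!

lemma cB_pos (n : ℕ) : 0 < cB n := by
  have := bellTwo_pos n
  have : (0:ℝ) < (n)! := by positivity
  unfold cB
  positivity

lemma cB_rec (m : ℕ) : ((m:ℝ)+1) * cB (m+1) = ∑ j ∈ range (m+1), cB (m-j) / (j)! := by
  have h1 : ∑ j ∈ range (m+1), cB (m-j) / (j)! = ∑ k ∈ range (m+1), cB k / (m-k)! := by
    rw [← Finset.sum_range_reflect (fun k => cB k / (m-k)!) (m+1)]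
    apply Finset.sum_congr rfl
    intro j hj
    simp only [Finset.mem_range] at hj
    have h2 : m + 1 - 1 - j = m - j := by omega
    have h3 : m - (m - j) = j := by omega
    rw [h2, h3]
  rw [h1]
  have h2 : ∀ k ∈ range (m+1), cB k / (m-k)! = (m.choose k : ℝ) * bellTwo k / (m)! := by
    intro k hk
    simp only [Finset.mem_range] at hk
    have hk' : k ≤ m := by omega
    have hfac : (m.choose k) * ((k)! * (m-k)!) = (m)! := by rw [← mul_assoc]; exact Nat.choose_mul_factorial_mul_factorial hk'
    have hfacR : ((m.choose k : ℝ)) * ((k)! * (m-k)!) = ((m)! : ℝ) := by exact_mod_cast congrArg Nat.cast hfac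
    unfold cB
    rw [div_div]
    rw [eq_div_iff (by positivity : ((m)! : ℝ) ≠ 0)]
    rw [div_mul_eq_mul_div, div_eq_iff (by positivity : ((k)! * ((m-k)!) : ℝ) ≠ 0)]
    linear_combination (-(bellTwo k)) * hfacR
  rw [Finset.sum_congr rfl h2, ← Finset.sum_div, ← bellTwo_succ]
  unfold cB
  have : ((m+1):ℕ)! = (m+1) * (m)! := rfl
  rw [this]
  push_cast
  field_simp


lemma cB_zero : cB 0 = 1 := by unfold cB; simp [bellTwo_zero]

lemma cB_one : cB 1 = 1 := by unfold cB; simp [bellTwo_one]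



lemma ratio_mono (n : ℕ) (hLC : ∀ m, m < n → cB m * cB (m+2) ≤ cB (m+1)^2) :
    ∀ j, j ≤ n → ∀ i, i ≤ j → cB (j+1) * cB i ≤ cB j * cB (i+1) := by
  intro j
  induction j with
  | zero =>
    intro _ i hi
    have : i = 0 := by omega
    subst this
    exact le_of_eq (mul_comm _ _)
  | succ j ihj =>
    intro hj i hi
    rcases Nat.eq_or_lt_of_le hi with rfl | hlt
    · exact le_of_eq (mul_comm _ _)
    · have hi' : i ≤ j := by omega
      have h2 := ihj (by omega) i hi'
      have h1 := hLC j (by omega)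
      have hidx : j + 1 + 1 = j + 2 := rfl
      rw [hidx]
      have key : (cB (j+2) * cB i) * (cB j * cB (j+1)) ≤
          (cB (j+1) * cB (i+1)) * (cB j * cB (j+1)) := by
        calc (cB (j+2) * cB i) * (cB j * cB (j+1))
            = (cB j * cB (j+2)) * (cB (j+1) * cB i) := by ring
          _ ≤ (cB (j+1)^2) * (cB j * cB (i+1)) := by
              apply mul_le_mul h1 h2 (mul_pos (cB_pos _) (cB_pos _)).le (sq_nonneg _)
          _ = (cB (j+1) * cB (i+1)) * (cB j * cB (j+1)) := by ring
      exact le_of_mul_le_mul_right key (mul_pos (cB_pos _) (cB_pos _))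

private noncomputable def dT (n j k : ℕ) : ℝ :=
  cB (n-j) * cB (n-(k+1)) * (((j:ℝ)) - k) / (((j+1)! : ℝ) * ((k+1)! : ℝ))

lemma dT_term (n j k : ℕ) :
    (cB (n-j) / (j)!) * (cB (n-(k+1)) / ((k+1))!) -
      (cB (n-j) / ((j+1))!) * (cB (n-(k+1)) / (k)!) = dT n j k := by
  unfold dT
  have f1 : ((j+1)! : ℝ) = ((j:ℝ)+1) * (j)! := by
    rw [Nat.factorial_succ]; push_cast; ring
  have f2 : ((k+1)! : ℝ) = ((k:ℝ)+1) * (k)! := by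
    rw [Nat.factorial_succ]; push_cast; ring
  rw [f1, f2]
  have hj : ((j)! : ℝ) ≠ 0 := by positivity
  have hk : ((k)! : ℝ) ≠ 0 := by positivity
  have hj1 : ((j:ℝ)+1) ≠ 0 := by positivity
  have hk1 : ((k:ℝ)+1) ≠ 0 := by positivity
  field_simp
  ring

lemma dT_pair_nonneg (n : ℕ)
    (hmono : ∀ j, j ≤ n → ∀ i, i ≤ j → cB (j+1) * cB i ≤ cB j * cB (i+1))
    {j k : ℕ} (hj : j < n) (hk : k < n) (hkj : k ≤ j) :
    0 ≤ dT n j k + dT n k j := by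
  have h := hmono (n-k-1) (by omega) (n-j-1) (by omega)
  have e1 : n-k-1+1 = n-k := by omega
  have e2 : n-j-1+1 = n-j := by omega
  rw [e1, e2] at h
  -- h : cB (n-k) * cB (n-j-1) ≤ cB (n-k-1) * cB (n-j)
  have e3 : n-(k+1) = n-k-1 := by omega
  have e4 : n-(j+1) = n-j-1 := by omega
  have expand : dT n j k + dT n k j =
      (((j:ℝ)) - k) * (cB (n-j) * cB (n-k-1) - cB (n-k) * cB (n-j-1)) /
        (((j+1)! : ℝ) * ((k+1)! : ℝ)) := by
    unfold dT
    rw [e3, e4]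
    ring
  rw [expand]
  apply div_nonneg
  · apply mul_nonneg
    · have : (k:ℝ) ≤ (j:ℝ) := by exact_mod_cast hkj
      linarith
    · linarith [h]
  · positivity

lemma dT_sum_nonneg (n : ℕ)
    (hmono : ∀ j, j ≤ n → ∀ i, i ≤ j → cB (j+1) * cB i ≤ cB j * cB (i+1)) :
    0 ≤ ∑ j ∈ range (n+1), ∑ k ∈ range n, dT n j k := by
  rw [Finset.sum_range_succ]
  have part2 : 0 ≤ ∑ k ∈ range n, dT n n k := by
    apply Finset.sum_nonneg
    intro k hk
    simp only [Finset.mem_range] at hk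
    unfold dT
    apply div_nonneg
    · apply mul_nonneg
      · exact mul_nonneg (cB_pos _).le (cB_pos _).le
      · have : (k:ℝ) ≤ (n:ℝ) := by exact_mod_cast hk.le
        linarith
    · positivity
  have part1 : 0 ≤ ∑ j ∈ range n, ∑ k ∈ range n, dT n j k := by
    have hcomm : ∑ j ∈ range n, ∑ k ∈ range n, dT n j k
        = ∑ j ∈ range n, ∑ k ∈ range n, dT n k j := Finset.sum_comm
    have h2 : (2:ℝ) * (∑ j ∈ range n, ∑ k ∈ range n, dT n j k)
        = ∑ j ∈ range n, ∑ k ∈ range n, (dT n j k + dT n k j) := by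
      rw [two_mul]
      nth_rewrite 2 [hcomm]
      rw [← Finset.sum_add_distrib]
      apply Finset.sum_congr rfl
      intro j _
      rw [← Finset.sum_add_distrib]
    have h3 : 0 ≤ ∑ j ∈ range n, ∑ k ∈ range n, (dT n j k + dT n k j) := by
      apply Finset.sum_nonneg; intro j hj
      apply Finset.sum_nonneg; intro k hk
      simp only [Finset.mem_range] at hj hk
      rcases le_total k j with hkj | hjk
      · exact dT_pair_nonneg n hmono hj hk hkj
      · rw [add_comm]; exact dT_pair_nonneg n hmono hk hj hjk
    linarith
  linarith

lemma key_ineq (n : ℕ)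
    (hmono : ∀ j, j ≤ n → ∀ i, i ≤ j → cB (j+1) * cB i ≤ cB j * cB (i+1)) :
    (∑ j ∈ range (n+1), cB (n-j) / ((j+1))!) * (∑ k ∈ range n, cB (n-(k+1)) / (k)!)
      ≤ (∑ j ∈ range (n+1), cB (n-j) / (j)!) * (∑ k ∈ range n, cB (n-(k+1)) / ((k+1))!) := by
  rw [← sub_nonneg, Finset.sum_mul_sum, Finset.sum_mul_sum, ← Finset.sum_sub_distrib]
  have : ∀ j ∈ range (n+1),
      (∑ k ∈ range n, (cB (n-j) / (j)!) * (cB (n-(k+1)) / ((k+1))!))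
        - (∑ k ∈ range n, (cB (n-j) / ((j+1))!) * (cB (n-(k+1)) / (k)!))
      = ∑ k ∈ range n, dT n j k := by
    intro j _
    rw [← Finset.sum_sub_distrib]
    exact Finset.sum_congr rfl fun k _ => dT_term n j k
  rw [Finset.sum_congr rfl this]
  exact dT_sum_nonneg n hmono
lemma cB_two : cB 2 = 1 := by
  have h := cB_rec 1
  rw [Finset.sum_range_succ, Finset.sum_range_succ, Finset.sum_range_zero] at h
  norm_num [cB_zero, cB_one] at h
  linarith

lemma cB_step (n : ℕ) (hn : 1 ≤ n) (hLC : ∀ m, m < n → cB m * cB (m+2) ≤ cB (m+1)^2) :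
    cB n * cB (n+2) ≤ cB (n+1)^2 := by
  have hmono := ratio_mono n hLC
  have hA : ((n:ℝ)+2) * cB (n+2) = cB (n+1) + ∑ j ∈ range (n+1), cB (n-j) / ((j+1))! := by
    have h := cB_rec (n+1)
    push_cast at h
    rw [Finset.sum_range_succ' (fun j => cB (n+1-j) / ((j):ℕ)!) (n+1)] at h
    have h2 : ∑ i ∈ range (n+1), cB (n+1-(i+1)) / (((i+1)):ℕ)!
        = ∑ i ∈ range (n+1), cB (n-i) / ((i+1))! :=
      Finset.sum_congr rfl (fun i hi => by rw [show n+1-(i+1) = n-i from by omega])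
    rw [h2] at h
    rw [show ((n:ℝ)+2) = (n:ℝ)+1+1 from by ring, show n+2 = n+1+1 from rfl, h]
    norm_num
    ring
  have hA' : ((n:ℝ)+1) * cB (n+1) = cB n + ∑ k ∈ range n, cB (n-(k+1)) / ((k+1))! := by
    have h := cB_rec n
    rw [Finset.sum_range_succ' (fun j => cB (n-j) / ((j):ℕ)!) n] at h
    rw [h]
    norm_num
    ring
  have hN : (n:ℝ) * cB n = ∑ k ∈ range n, cB (n-(k+1)) / (k)! := by
    have h := cB_rec (n-1)
    have e : n - 1 + 1 = n := by omega
    rw [e] at h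
    have ecast : ((n-1 : ℕ):ℝ) = (n:ℝ) - 1 := by
      push_cast [Nat.cast_sub hn]; ring
    rw [ecast, show ((n:ℝ)-1)+1 = (n:ℝ) from by ring] at h
    rw [h]
    exact Finset.sum_congr rfl (fun j hj => by rw [show n-1-j = n-(j+1) from by omega])
  have hB : ((n:ℝ)+1) * cB (n+1) = ∑ j ∈ range (n+1), cB (n-j) / (j)! := cB_rec n
  have key := key_ineq n hmono
  rw [← hB, ← hN] at key
  have hdec : cB (n+1) ≤ cB n := by
    have h := hmono n (le_refl n) 0 (Nat.zero_le n)
    rwa [cB_zero, cB_one, mul_one, mul_one] at h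
  have e4 : (∑ j ∈ range (n+1), cB (n-j) / ((j+1))!) * ((n:ℝ) * cB n)
      ≤ (((n:ℝ)+1) * cB (n+1)) * ((((n:ℝ)+1)) * cB (n+1) - cB n) := by
    have hXX : ∑ k ∈ range n, cB (n-(k+1)) / ((k+1))! = ((n:ℝ)+1) * cB (n+1) - cB n := by
      linarith [hA']
    rw [← hXX]
    exact key
  have e1' : (n:ℝ) * cB n * (((n:ℝ)+2) * cB (n+2))
      = (n:ℝ) * cB n * (cB (n+1) + ∑ j ∈ range (n+1), cB (n-j) / ((j+1))!) := by rw [hA]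
  have hapos : 0 < cB n := cB_pos n
  have hbpos : 0 < cB (n+1) := cB_pos (n+1)
  have hn1 : (1:ℝ) ≤ (n:ℝ) := by exact_mod_cast hn
  have hfin : ((n:ℝ)*((n:ℝ)+2)) * (cB n * cB (n+2)) ≤ ((n:ℝ)*((n:ℝ)+2)) * cB (n+1)^2 := by
    nlinarith [e1', e4, mul_nonneg (sub_nonneg.mpr hdec) hbpos.le]
  exact le_of_mul_le_mul_left hfin (by nlinarith)

theorem cB_concave : ∀ n, cB n * cB (n+2) ≤ cB (n+1)^2 := by
  intro n
  induction n using Nat.strong_induction_on with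
  | _ n ih =>
    rcases Nat.eq_zero_or_pos n with rfl | hn
    · rw [cB_zero, cB_two, cB_one]; norm_num
    · exact cB_step n hn ih
lemma cB_mono_full (j i : ℕ) (hij : i ≤ j) : cB (j+1) * cB i ≤ cB j * cB (i+1) :=
  ratio_mono j (fun m _ => cB_concave m) j (le_refl j) i hij

lemma cB_convex (n : ℕ) : ((n:ℝ)+1) * cB (n+1)^2 ≤ ((n:ℝ)+2) * (cB n * cB (n+2)) := by
  have hA2 : ((n:ℝ)+2) * cB (n+2) = ∑ k ∈ range (n+2), cB (n+1-k) / (k)! := by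
    have h := cB_rec (n+1)
    push_cast at h
    rw [show ((n:ℝ)+2) = (n:ℝ)+1+1 from by ring, show n+2 = n+1+1 from rfl, h]
  have hB : ((n:ℝ)+1) * cB (n+1) = ∑ k ∈ range (n+1), cB (n-k) / (k)! := cB_rec n
  have step1 : ((n:ℝ)+1) * cB (n+1)^2 = ∑ k ∈ range (n+1), cB (n+1) * (cB (n-k) / (k)!) := by
    rw [← Finset.mul_sum, ← hB]; ring
  have step2 : ∑ k ∈ range (n+1), cB (n+1) * (cB (n-k) / (k)!)
      ≤ ∑ k ∈ range (n+1), cB n * (cB (n+1-k) / (k)!) := by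
    apply Finset.sum_le_sum
    intro k hk
    simp only [Finset.mem_range] at hk
    have h := cB_mono_full n (n-k) (by omega)
    rw [show n-k+1 = n+1-k from by omega] at h
    have hfk : (0:ℝ) < (k)! := by positivity
    rw [mul_div_assoc', mul_div_assoc', div_le_div_iff₀ hfk hfk]
    nlinarith [h, hfk]
  have step3 : ∑ k ∈ range (n+1), cB n * (cB (n+1-k) / (k)!)
      ≤ ∑ k ∈ range (n+2), cB n * (cB (n+1-k) / (k)!) := by
    apply Finset.sum_le_sum_of_subset_of_nonneg
    · exact Finset.range_subset_range.mpr (by omega)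
    · intro k _ _
      have := cB_pos n
      have := cB_pos (n+1-k)
      positivity
  have step4 : ∑ k ∈ range (n+2), cB n * (cB (n+1-k) / (k)!) = ((n:ℝ)+2) * (cB n * cB (n+2)) := by
    rw [← Finset.mul_sum, ← hA2]; ring
  linarith [step1, step2, step3, step4]


lemma bellTwo_eq_cB (k : ℕ) : bellTwo k = cB k * (k)! := by
  unfold cB
  field_simp

/-- The sequence `bellTwo n / n !` is log-concave and the sequence `bellTwo n` is
log-convex. -/
theorem bellTwo_log_concave_log_convex :
    (∀ n : ℕ, (bellTwo n / (n ! : ℝ)) * (bellTwo (n + 2) / ((n + 2)! : ℝ)) ≤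
      (bellTwo (n + 1) / ((n + 1)! : ℝ)) ^ 2) ∧
    (∀ n : ℕ, bellTwo n * bellTwo (n + 2) ≥ bellTwo (n + 1) ^ 2) := by
  constructor
  · intro n
    exact cB_concave n
  · intro n
    rw [ge_iff_le]
    have h := cB_convex n
    rw [bellTwo_eq_cB n, bellTwo_eq_cB (n+1), bellTwo_eq_cB (n+2)]
    have f1 : ((n+1)! : ℝ) = ((n:ℝ)+1) * ((n)! : ℝ) := by
      rw [Nat.factorial_succ]; push_cast; ring
    have f2 : ((n+2)! : ℝ) = ((n:ℝ)+2) * (((n+1))! : ℝ) := by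
      rw [show n+2 = (n+1)+1 from rfl, Nat.factorial_succ]; push_cast; ring
    rw [f2, f1]
    have hh := mul_le_mul_of_nonneg_left h
      (by positivity : (0:ℝ) ≤ ((n:ℝ)+1) * ((n)! : ℝ)^2)
    nlinarith [hh]
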